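/- Every finite nonempty relation admits a prime factorization: there exist prime factors C_1, ..., C_m (relations over pairwise disjoint nonempty attribute sets partitioning the schema) such that R = C_1 × ... × C_m. -/
import Mathlib


open Classical

noncomputable def restrictT {α D : Type*} (V : Set α) (t : α → Option D) : α → Option D :=
  fun a => if a ∈ V then t a else none

def combineT {α D : Type*} (q r : α → Option D) : α → Option D :=
  fun a => (q a).orElse (fun _ => r a)

def prodRel {α D : Type*} (Q R : Set (α → Option D)) : Set (α → Option D) :=
  Set.image2 combineT Q R

def IsOver {α D : Type*} (U : Set α) (t : α → Option D) : Prop :=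
  ∀ a, (t a).isSome ↔ a ∈ U

def IsRelOver {α D : Type*} (U : Set α) (R : Set (α → Option D)) : Prop :=
  R.Finite ∧ ∀ t ∈ R, IsOver U t

noncomputable def projRel {α D : Type*} (V : Set α) (R : Set (α → Option D)) :
    Set (α → Option D) :=
  (restrictT V) '' R

def IsFactor {α D : Type*} (U : Set α) (R : Set (α → Option D))
    (V : Set α) (Q : Set (α → Option D)) : Prop :=
  V.Nonempty ∧ V ⊆ U ∧ IsRelOver V Q ∧
    ∃ R', IsRelOver (U \ V) R' ∧ R = prodRel Q R'

noncomputable def prodList {α D : Type*} (L : List (Set (α → Option D))) :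
    Set (α → Option D) :=
  L.foldr prodRel {fun _ => none}

def IsPrimeRel {α D : Type*} (U : Set α) (Q : Set (α → Option D)) : Prop :=
  IsRelOver U Q ∧ ∀ V P, IsFactor U Q V P → P = Q

def selEq {α D : Type*} (A : α) (v : D) (S : Set (α → Option D)) : Set (α → Option D) :=
  {t ∈ S | t A = some v}

def selNe {α D : Type*} (A : α) (v : D) (S : Set (α → Option D)) : Set (α → Option D) :=
  {t ∈ S | t A ≠ some v}

theorem combineT_assoc {α D : Type*} (q r s : α → Option D) :
    combineT (combineT q r) s = combineT q (combineT r s) := by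
  funext a
  simp only [combineT]
  cases q a <;> cases r a <;> rfl

theorem combineT_none {α D : Type*} (q : α → Option D) :
    combineT q (fun _ => none) = q := by
  funext a; simp only [combineT]; cases q a <;> rfl

theorem prodRel_none {α D : Type*} (Q : Set (α → Option D)) :
    prodRel Q {fun _ => none} = Q := by
  unfold prodRel
  rw [Set.image2_singleton_right]
  simp [combineT_none]

theorem prodRel_assoc {α D : Type*} (Q R S : Set (α → Option D)) :
    prodRel (prodRel Q R) S = prodRel Q (prodRel R S) :=
  Set.image2_assoc combineT_assoc

theorem isOver_combine {α D : Type*} {A B : Set α} {p r : α → Option D}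
    (hp : IsOver A p) (hr : IsOver B r) : IsOver (A ∪ B) (combineT p r) := by
  intro a
  simp only [combineT, Set.mem_union, ← hp a, ← hr a]
  cases p a <;> cases r a <;> simp [Option.orElse]

theorem combineT_comm {α D : Type*} {A B : Set α} {p r : α → Option D}
    (hp : IsOver A p) (hr : IsOver B r) (hd : Disjoint A B) :
    combineT p r = combineT r p := by
  funext a
  simp only [combineT]
  cases hpa : p a with
  | none => cases hra : r a <;> rfl
  | some v =>
    cases hra : r a with
    | none => rfl
    | some w =>
      exfalso
      exact (hd.ne_of_mem ((hp a).1 (by simp [hpa])) ((hr a).1 (by simp [hra]))) rfl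

theorem isRelOver_prod {α D : Type*} {A B : Set α} {P R : Set (α → Option D)}
    (hP : IsRelOver A P) (hR : IsRelOver B R) : IsRelOver (A ∪ B) (prodRel P R) := by
  refine ⟨Set.Finite.image2 _ hP.1 hR.1, ?_⟩
  rintro t ⟨p, hp, r, hr, rfl⟩
  exact isOver_combine (hP.2 p hp) (hR.2 r hr)

theorem isOver_empty_eq {α D : Type*} {t : α → Option D} (h : IsOver (∅ : Set α) t) :
    t = fun _ => none := by
  funext a
  have := h a
  simp only [Set.mem_empty_iff_false, iff_false] at this
  exact Option.not_isSome_iff_eq_none.1 this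

theorem prodRel_comm {α D : Type*} {A B : Set α} {P R : Set (α → Option D)}
    (hP : IsRelOver A P) (hR : IsRelOver B R) (hd : Disjoint A B) :
    prodRel P R = prodRel R P := by
  unfold prodRel
  ext t
  constructor
  · rintro ⟨p, hp, r, hr, rfl⟩
    exact ⟨r, hr, p, hp, (combineT_comm (hP.2 p hp) (hR.2 r hr) hd).symm⟩
  · rintro ⟨r, hr, p, hp, rfl⟩
    exact ⟨p, hp, r, hr, (combineT_comm (hP.2 p hp) (hR.2 r hr) hd)⟩

theorem factor_trans {α D : Type*} {U V W : Set α} {R P Q : Set (α → Option D)}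
    (h1 : IsFactor U R V P) (h2 : IsFactor V P W Q) : IsFactor U R W Q := by
  obtain ⟨hVne, hVU, hPrel, R', hR'rel, hReq⟩ := h1
  obtain ⟨hWne, hWV, hQrel, P', hP'rel, hPeq⟩ := h2
  refine ⟨hWne, hWV.trans hVU, hQrel, prodRel P' R', ?_, ?_⟩
  · have := isRelOver_prod hP'rel hR'rel
    have hset : (V \ W) ∪ (U \ V) = U \ W := by
      ext a
      simp only [Set.mem_union, Set.mem_diff]
      constructor
      · rintro (⟨h1, h2⟩ | ⟨h1, h2⟩)
        · exact ⟨hVU h1, h2⟩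
        · exact ⟨h1, fun hw => h2 (hWV hw)⟩
      · rintro ⟨h1, h2⟩
        by_cases hv : a ∈ V
        · exact Or.inl ⟨hv, h2⟩
        · exact Or.inr ⟨h1, hv⟩
    rwa [hset] at this
  · rw [hReq, hPeq, prodRel_assoc]

theorem prodRel_none_left {α D : Type*} (Q : Set (α → Option D)) :
    prodRel {fun _ => none} Q = Q := by
  unfold prodRel
  rw [Set.image2_singleton_left]
  have : ∀ r : α → Option D, combineT (fun _ => none) r = r := by
    intro r; funext a; rfl
  simp [this]

theorem prodList_append {α D : Type*} (L1 L2 : List (Set (α → Option D))) :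
    prodList (L1 ++ L2) = prodRel (prodList L1) (prodList L2) := by
  induction L1 with
  | nil =>
    simp only [List.nil_append, prodList, List.foldr]
    rw [prodRel_none_left]
  | cons h t ih =>
    show prodRel h (prodList (t ++ L2)) = prodRel (prodRel h (prodList t)) _
    rw [ih, prodRel_assoc]

theorem factor_ne_whole {α D : Type*} {U V : Set α} {R P R' : Set (α → Option D)}
    (hVU : V ⊆ U) (hR' : IsRelOver (U \ V) R')
    (hReq : R = prodRel P R') (hRne : R.Nonempty) (hne : P ≠ R) :
    (U \ V).Nonempty := by
  by_contra h
  rw [Set.not_nonempty_iff_eq_empty] at h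
  have hR'sub : R' ⊆ {fun _ => none} := by
    intro t ht
    have := hR'.2 t ht
    rw [h] at this
    exact isOver_empty_eq this
  have hR'ne : R'.Nonempty := by
    rw [hReq] at hRne
    exact (Set.image2_nonempty_iff.1 hRne).2
  have : R' = {fun _ => none} := Set.Subset.antisymm hR'sub (by
    rintro t rfl
    obtain ⟨s, hs⟩ := hR'ne
    have := hR'sub hs
    simp only [Set.mem_singleton_iff] at this
    rwa [← this])
  apply hne
  rw [hReq, this, prodRel_none]

theorem self_factor {α D : Type*} {U : Set α} {R : Set (α → Option D)}
    (hUne : U.Nonempty) (hR : IsRelOver U R) : IsFactor U R U R := by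
  refine ⟨hUne, subset_rfl, hR, {fun _ => none}, ⟨Set.finite_singleton _, ?_⟩, ?_⟩
  · rintro t rfl
    intro a
    simp
  · rw [prodRel_none]

theorem main_aux {α D : Type*} : ∀ (n : ℕ) (U : Set α), U.Finite → U.ncard ≤ n →
    U.Nonempty → ∀ R : Set (α → Option D), IsRelOver U R → R.Nonempty →
    ∃ L : List (Set α × Set (α → Option D)),
      L ≠ [] ∧
      (∀ p ∈ L, IsFactor U R p.1 p.2 ∧ IsPrimeRel p.1 p.2) ∧
      L.Pairwise (fun p q => Disjoint p.1 q.1) ∧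
      (∀ a, a ∈ U ↔ ∃ p ∈ L, a ∈ p.1) ∧
      prodList (L.map Prod.snd) = R := by
  intro n
  induction n with
  | zero =>
    intro U hUfin hcard hUne R hR hRne
    exfalso
    have := Set.ncard_pos hUfin |>.2 hUne
    omega
  | succ n ih =>
    intro U hUfin hcard hUne R hR hRne
    by_cases hprime : IsPrimeRel U R
    · refine ⟨[(U, R)], by simp, ?_, by simp, ?_, ?_⟩
      · rintro p hp
        simp only [List.mem_singleton] at hp
        subst hp
        exact ⟨self_factor hUne hR, hprime⟩
      · intro a
        simp only [List.mem_singleton]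
        constructor
        · intro ha; exact ⟨(U, R), rfl, ha⟩
        · rintro ⟨p, rfl, ha⟩; exact ha
      · simp only [List.map_cons, List.map_nil, prodList, List.foldr]
        rw [prodRel_none]
    · have hnot : ∃ V P, IsFactor U R V P ∧ P ≠ R := by
        by_contra h
        push_neg at h
        exact hprime ⟨hR, fun V P hf => h V P hf⟩
      obtain ⟨V, P, hF, hPne⟩ := hnot
      obtain ⟨hVne, hVU, hPrel, R', hR'rel, hReq⟩ := hF
      have hUVne : (U \ V).Nonempty := factor_ne_whole hVU hR'rel hReq hRne hPne
      have hPneR : P.Nonempty := by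
        rw [hReq] at hRne; exact (Set.image2_nonempty_iff.1 hRne).1
      have hR'neR : R'.Nonempty := by
        rw [hReq] at hRne; exact (Set.image2_nonempty_iff.1 hRne).2
      have hVfin : V.Finite := hUfin.subset hVU
      have hUVfin : (U \ V).Finite := hUfin.subset Set.diff_subset
      have hVlt : V.ncard < U.ncard := by
        apply Set.ncard_lt_ncard _ hUfin
        constructor
        · exact hVU
        · intro h
          obtain ⟨a, ha⟩ := hUVne
          exact ha.2 (h ha.1)
      have hUVlt : (U \ V).ncard < U.ncard := by
        apply Set.ncard_lt_ncard _ hUfin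
        constructor
        · exact Set.diff_subset
        · intro h
          obtain ⟨a, ha⟩ := hVne
          exact (h (hVU ha)).2 ha
      obtain ⟨L1, hL1ne, hL1f, hL1p, hL1cov, hL1prod⟩ :=
        ih V hVfin (by omega) hVne P hPrel hPneR
      obtain ⟨L2, hL2ne, hL2f, hL2p, hL2cov, hL2prod⟩ :=
        ih (U \ V) hUVfin (by omega) hUVne R' hR'rel hR'neR
      -- (U\V, R') is a factor of R
      have hF1 : IsFactor U R V P := ⟨hVne, hVU, hPrel, R', hR'rel, hReq⟩
      have hF2 : IsFactor U R (U \ V) R' := by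
        refine ⟨hUVne, Set.diff_subset, hR'rel, P, ?_, ?_⟩
        · rwa [Set.diff_diff_cancel_left hVU]
        · rw [hReq]
          exact prodRel_comm hPrel hR'rel (Set.disjoint_sdiff_right) |>.symm ▸
            (prodRel_comm hPrel hR'rel (Set.disjoint_sdiff_right))
      refine ⟨L1 ++ L2, by simp [hL1ne], ?_, ?_, ?_, ?_⟩
      · intro p hp
        rcases List.mem_append.1 hp with h | h
        · exact ⟨factor_trans hF1 (hL1f p h).1, (hL1f p h).2⟩
        · exact ⟨factor_trans hF2 (hL2f p h).1, (hL2f p h).2⟩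
      · rw [List.pairwise_append]
        refine ⟨hL1p, hL2p, ?_⟩
        intro p hp q hq
        have h1 : p.1 ⊆ V := (hL1f p hp).1.2.1
        have h2 : q.1 ⊆ U \ V := (hL2f q hq).1.2.1
        exact Set.disjoint_of_subset h1 h2 Set.disjoint_sdiff_right
      · intro a
        constructor
        · intro ha
          by_cases hv : a ∈ V
          · obtain ⟨p, hp, hap⟩ := (hL1cov a).1 hv
            exact ⟨p, List.mem_append.2 (Or.inl hp), hap⟩
          · obtain ⟨p, hp, hap⟩ := (hL2cov a).1 ⟨ha, hv⟩
            exact ⟨p, List.mem_append.2 (Or.inr hp), hap⟩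
        · rintro ⟨p, hp, hap⟩
          rcases List.mem_append.1 hp with h | h
          · exact hVU ((hL1f p h).1.2.1 hap)
          · exact Set.diff_subset ((hL2f p h).1.2.1 hap)
      · rw [List.map_append, prodList_append, hL1prod, hL2prod, hReq]

theorem stmt_0 {α D : Type*} (U : Set α) (hUfin : U.Finite) (hUne : U.Nonempty)
    (R : Set (α → Option D)) (hR : IsRelOver U R) (hRne : R.Nonempty) :
    ∃ L : List (Set α × Set (α → Option D)),
      L ≠ [] ∧
      (∀ p ∈ L, IsFactor U R p.1 p.2 ∧ IsPrimeRel p.1 p.2) ∧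
      L.Pairwise (fun p q => Disjoint p.1 q.1) ∧
      (∀ a, a ∈ U ↔ ∃ p ∈ L, a ∈ p.1) ∧
      prodList (L.map Prod.snd) = R :=
  main_aux U.ncard U hUfin le_rfl hUne R hR hRne
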